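/- Let N, n, m be natural numbers, A an n×N real matrix, b ∈ ℝ^n, C an m×N real matrix, and d ∈ ℝ^m. If x is an extreme point of the convex set P = {x ∈ ℝ^N : x ≥ 0 componentwise, A x = b, and C x ≤ d componentwise}, then the number of indices i with x_i ≠ 0 is at most n + m. -/

import Mathlib

/-- Extension by zero as a linear map. -/
def extZero {N : ℕ} (S : Finset (Fin N)) : ({i // i ∈ S} → ℝ) →ₗ[ℝ] (Fin N → ℝ) where
  toFun z i := if h : i ∈ S then z ⟨i, h⟩ else 0
  map_add' z w := by ext i; by_cases h : i ∈ S <;> simp [h]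
  map_smul' c z := by ext i; by_cases h : i ∈ S <;> simp [h]

/-- An extreme point of the polyhedron `{x ≥ 0, A x = b, C x ≤ d}` has at most
`n + m` nonzero coordinates. -/
theorem extreme_point_support_card_le
    (N n m : ℕ) (A : Matrix (Fin n) (Fin N) ℝ) (b : Fin n → ℝ)
    (C : Matrix (Fin m) (Fin N) ℝ) (d : Fin m → ℝ)
    (x : Fin N → ℝ)
    (hx : x ∈ Set.extremePoints ℝ {y : Fin N → ℝ |
      (∀ i, 0 ≤ y i) ∧ A.mulVec y = b ∧ ∀ i, C.mulVec y i ≤ d i}) :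
    (Finset.univ.filter (fun i => x i ≠ 0)).card ≤ n + m := by
  by_contra hcard
  push_neg at hcard
  set S : Finset (Fin N) := Finset.univ.filter (fun i => x i ≠ 0) with hS
  obtain ⟨hxP, hext⟩ := hx
  obtain ⟨hx0, hxA, hxC⟩ := hxP
  have hxpos : ∀ i ∈ S, 0 < x i := by
    intro i hi
    simp only [hS, Finset.mem_filter] at hi
    exact lt_of_le_of_ne (hx0 i) (Ne.symm hi.2)
  -- the combined linear map
  set φ : ({i // i ∈ S} → ℝ) →ₗ[ℝ] (Fin n → ℝ) × (Fin m → ℝ) :=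
    ((Matrix.mulVecLin A).prod (Matrix.mulVecLin C)).comp (extZero S) with hφ
  have hninj : ¬ Function.Injective φ := by
    intro hinj
    have := LinearMap.finrank_le_finrank_of_injective hinj
    rw [Module.finrank_fintype_fun_eq_card] at this
    simp only [Fintype.card_coe] at this
    have h2 : Module.finrank ℝ ((Fin n → ℝ) × (Fin m → ℝ)) = n + m := by
      simp [Module.finrank_prod, Module.finrank_fintype_fun_eq_card]
    omega
  obtain ⟨a, c, hac, hne⟩ : ∃ a c, φ a = φ c ∧ a ≠ c := by
    simpa [Function.Injective] using hninj
  set z := a - c with hz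
  have hzne : z ≠ 0 := sub_ne_zero_of_ne hne
  have hφz : φ z = 0 := by rw [hz, map_sub, hac, sub_self]
  set u : Fin N → ℝ := extZero S z with hu
  have huA : A.mulVec u = 0 := congrArg Prod.fst hφz
  have huC : C.mulVec u = 0 := congrArg Prod.snd hφz
  have husupp : ∀ i, i ∉ S → u i = 0 := by
    intro i hi; simp [hu, extZero, hi]
  have hune : u ≠ 0 := by
    obtain ⟨j, hj⟩ := Function.ne_iff.mp hzne
    intro h
    apply hj
    have : u j.1 = 0 := by rw [h]; rfl
    simpa [hu, extZero, j.2] using this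
  have hSne : S.Nonempty := by
    rw [← Finset.card_pos]; omega
  set ε : ℝ := S.inf' hSne (fun i => x i / (|u i| + 1)) with hε
  have hεpos : 0 < ε := by
    rw [hε, Finset.lt_inf'_iff]
    intro i hi
    exact div_pos (hxpos i hi) (by positivity)
  have hkey : ∀ i, ε * |u i| ≤ x i := by
    intro i
    by_cases hi : i ∈ S
    · have h1 : ε ≤ x i / (|u i| + 1) := Finset.inf'_le _ hi
      have h2 : ε * |u i| ≤ (x i / (|u i| + 1)) * (|u i| + 1) := by
        exact mul_le_mul h1 (by linarith [abs_nonneg (u i)]) (abs_nonneg _)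
          (div_nonneg (hx0 i) (by positivity))
      rwa [div_mul_cancel₀] at h2
      exact (by positivity : (0:ℝ) < |u i| + 1).ne'
    · simp [husupp i hi]; exact hx0 i
  have hmem : ∀ (s : ℝ), |s| = ε → (x + s • u) ∈ {y : Fin N → ℝ |
      (∀ i, 0 ≤ y i) ∧ A.mulVec y = b ∧ ∀ i, C.mulVec y i ≤ d i} := by
    intro s hs
    refine ⟨?_, ?_, ?_⟩
    · intro i
      have : |s * u i| ≤ x i := by
        rw [abs_mul, hs]; exact hkey i
      have := neg_le_of_abs_le this
      simp only [Pi.add_apply, Pi.smul_apply, smul_eq_mul]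
      linarith
    · rw [Matrix.mulVec_add, Matrix.mulVec_smul, huA, hxA]; simp
    · intro i
      rw [Matrix.mulVec_add, Matrix.mulVec_smul, huC]
      simpa using hxC i
  have h1 := hmem ε (abs_of_pos hεpos)
  have h2 := hmem (-ε) (by rw [abs_neg]; exact abs_of_pos hεpos)
  have hseg : x ∈ openSegment ℝ (x + ε • u) (x + (-ε) • u) := by
    refine ⟨1/2, 1/2, by norm_num, by norm_num, by norm_num, ?_⟩
    ext i
    simp only [Pi.add_apply, Pi.smul_apply, smul_eq_mul]
    ring
  have := hext h1 h2 hseg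
  apply hune
  have hεu : ε • u = 0 := by
    have h := this
    have : ε • u = (x + ε • u) - x := by abel
    rw [this, h, sub_self]
  have := smul_eq_zero.mp hεu
  rcases this with h | h
  · exact absurd h (ne_of_gt hεpos)
  · exact h
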